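/- Let E be a real Hilbert space, X ⊆ E a nonempty closed convex set, f : E → ℝ an ℓ-smooth and μ-strongly convex function with 0 < μ ≤ ℓ, and x* ∈ X the minimizer of f over X. Let g : E → E satisfy ‖g(x) − ∇f(x)‖ ≤ δ for all x ∈ E, where δ ≥ 0. Define sequences (x_t), (y_t) by x₀ = y₀ ∈ X and, for t ≥ 0, x_{t+1} = Π_X(y_t − g(y_t)/(2ℓ)) and y_{t+1} = x_{t+1} + ((2 − √(μ/ℓ))/(2 + √(μ/ℓ)))·(x_{t+1} − x_t). Then for every T ≥ 0, f(x_T) − f(x*) ≤ exp(−(T/2)·√(μ/ℓ))·( f(x₀) − f(x*) + (μ/4)‖x₀ − x*‖² ) + √(ℓ/μ)·(1/ℓ + 2/μ)·δ². -/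

import Mathlib

open RealInnerProductSpace

/-- `p` is the metric projection of `v` onto `S`. -/
def IsProjOn {H : Type*} [NormedAddCommGroup H] (S : Set H) (v p : H) : Prop :=
  p ∈ S ∧ ∀ w ∈ S, ‖v - p‖ ≤ ‖v - w‖

section AuxAGD

set_option linter.unusedSectionVars false
set_option linter.unusedVariables false

variable {E : Type*} [NormedAddCommGroup E] [InnerProductSpace ℝ E] [CompleteSpace E]

lemma fderiv_apply_eq_inner_gradient (f : E → ℝ) (x v : E) :
    fderiv ℝ f x v = ⟪gradient f x, v⟫ := by
  rw [gradient, InnerProductSpace.toDual_symm_apply]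

lemma line_hasDerivAt (f : E → ℝ) (hf : Differentiable ℝ f) (a v : E) (t : ℝ) :
    HasDerivAt (fun s : ℝ => f (a + s • v)) ⟪gradient f (a + t • v), v⟫ t := by
  have hline : HasDerivAt (fun s : ℝ => a + s • v) v t := by
    simpa using ((hasDerivAt_id t).smul_const v).const_add a
  have h := (hf (a + t • v)).hasFDerivAt.comp_hasDerivAt t hline
  rw [fderiv_apply_eq_inner_gradient] at h
  exact h

lemma convexOn_gradient_tangent_le {f : E → ℝ} (hconv : ConvexOn ℝ Set.univ f)
    (hdiff : Differentiable ℝ f) (a b : E) :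
    f a + ⟪gradient f a, b - a⟫ ≤ f b := by
  set φ : ℝ → ℝ := fun t => f (a + t • (b - a)) with hφ
  have hφconv : ConvexOn ℝ Set.univ φ := by
    have h := hconv.comp_affineMap (AffineMap.lineMap a b : ℝ →ᵃ[ℝ] E)
    have h2 : (f ∘ (AffineMap.lineMap a b : ℝ →ᵃ[ℝ] E)) = φ := by
      funext t
      simp only [Function.comp_apply, AffineMap.lineMap_apply, φ, vsub_eq_sub, vadd_eq_add]
      congr 1
      abel
    rw [h2, Set.preimage_univ] at h
    exact h
  have hder := line_hasDerivAt f hdiff a (b - a) 0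
  have hd0 : DifferentiableAt ℝ φ 0 := hder.differentiableAt
  have hslope := hφconv.deriv_le_slope (Set.mem_univ (0:ℝ)) (Set.mem_univ 1) one_pos hd0
  rw [hder.deriv] at hslope
  rw [slope_def_field] at hslope
  have h0 : φ 0 = f a := by simp [φ]
  have h1 : φ 1 = f b := by simp [φ]
  rw [h0, h1] at hslope
  have : ⟪gradient f (a + (0:ℝ) • (b - a)), b - a⟫ = ⟪gradient f a, b - a⟫ := by
    norm_num
  rw [this] at hslope
  have : (f b - f a) / (1 - 0 : ℝ) = f b - f a := by norm_num
  rw [this] at hslope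
  linarith

lemma strong_convex_lower {f : E → ℝ} {μ : ℝ}
    (hdiff : Differentiable ℝ f)
    (hsc : ConvexOn ℝ Set.univ (fun x => f x - μ / 2 * ‖x‖ ^ 2)) (a b : E) :
    f a + ⟪gradient f a, b - a⟫ + μ / 2 * ‖b - a‖ ^ 2 ≤ f b := by
  set h : E → ℝ := fun x => f x - μ / 2 * ⟪x, x⟫ with hh
  have hsc' : ConvexOn ℝ Set.univ h := by
    have : h = fun x => f x - μ / 2 * ‖x‖ ^ 2 := by
      funext x; simp [hh, real_inner_self_eq_norm_sq]
    rw [this]; exact hsc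
  have hinn : Differentiable ℝ (fun x : E => ⟪x, x⟫) :=
    (differentiable_id.inner ℝ differentiable_id)
  have hdiffh : Differentiable ℝ h := hdiff.sub (hinn.const_mul (μ / 2))
  have key : ⟪gradient h a, b - a⟫ = ⟪gradient f a, b - a⟫ - μ * ⟪a, b - a⟫ := by
    rw [← fderiv_apply_eq_inner_gradient, ← fderiv_apply_eq_inner_gradient]
    have h1 : fderiv ℝ h a = fderiv ℝ f a - (μ / 2) • fderiv ℝ (fun x : E => ⟪x, x⟫) a := by
      rw [hh]
      rw [fderiv_fun_sub (hdiff a) ((hinn a).const_mul (μ / 2)), fderiv_const_mul (hinn a)]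
    rw [h1]
    have h2 : fderiv ℝ (fun x : E => ⟪x, x⟫) a (b - a) = 2 * ⟪a, b - a⟫ := by
      rw [fderiv_inner_apply ℝ differentiableAt_fun_id differentiableAt_fun_id]
      simp only [fderiv_fun_id, ContinuousLinearMap.coe_id', id_eq]
      rw [real_inner_comm (b - a) a]
      ring
    simp only [ContinuousLinearMap.sub_apply, ContinuousLinearMap.smul_apply, h2, smul_eq_mul]
    ring
  have htan := convexOn_gradient_tangent_le hsc' hdiffh a b
  simp only [hh] at htan
  rw [key] at htan
  have e1 : ⟪a, b - a⟫ = ⟪a, b⟫ - ⟪a, a⟫ := inner_sub_right a b a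
  have e2 : ‖b - a‖ ^ 2 = ⟪b, b⟫ - 2 * ⟪a, b⟫ + ⟪a, a⟫ := by
    rw [← real_inner_self_eq_norm_sq]
    rw [real_inner_sub_sub_self]
    rw [real_inner_comm b a]
  have ha : ⟪a, a⟫ = ‖a‖ ^ 2 := real_inner_self_eq_norm_sq a
  have hb : ⟪b, b⟫ = ‖b‖ ^ 2 := real_inner_self_eq_norm_sq b
  have comb : μ / 2 * ‖b - a‖ ^ 2 = μ / 2 * ‖b‖ ^ 2 - μ * ⟪a, b⟫ + μ / 2 * ‖a‖ ^ 2 := by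
    rw [e2, ha, hb]; ring
  have e1' : μ * ⟪a, b - a⟫ = μ * ⟪a, b⟫ - μ * ‖a‖ ^ 2 := by rw [e1, ha]; ring
  have haμ : μ / 2 * ⟪a, a⟫ = μ / 2 * ‖a‖ ^ 2 := by rw [ha]
  have hbμ : μ / 2 * ⟪b, b⟫ = μ / 2 * ‖b‖ ^ 2 := by rw [hb]
  linarith [htan, comb, e1', haμ, hbμ]


lemma smooth_upper {f : E → ℝ} {ℓ : ℝ} (hdiff : Differentiable ℝ f)
    (hsmooth : ∀ a b : E, ‖gradient f a - gradient f b‖ ≤ ℓ * ‖a - b‖) (a b : E) :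
    f b ≤ f a + ⟪gradient f a, b - a⟫ + ℓ / 2 * ‖b - a‖ ^ 2 := by
  set d := b - a with hd
  set ψ : ℝ → ℝ := fun t => f (a + t • d) - t * ⟪gradient f a, d⟫ - ℓ / 2 * t ^ 2 * ‖d‖ ^ 2
    with hψ
  have hψd : ∀ t : ℝ, HasDerivAt ψ
      (⟪gradient f (a + t • d), d⟫ - ⟪gradient f a, d⟫ - ℓ * t * ‖d‖ ^ 2) t := by
    intro t
    have h1 := line_hasDerivAt f hdiff a d t
    have h2 : HasDerivAt (fun t : ℝ => t * ⟪gradient f a, d⟫) ⟪gradient f a, d⟫ t := by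
      simpa using (hasDerivAt_id t).mul_const ⟪gradient f a, d⟫
    have h3 : HasDerivAt (fun t : ℝ => ℓ / 2 * t ^ 2 * ‖d‖ ^ 2) (ℓ * t * ‖d‖ ^ 2) t := by
      have := ((hasDerivAt_pow 2 t).const_mul (ℓ / 2)).mul_const (‖d‖ ^ 2)
      refine this.congr_deriv ?_
      ring
    exact (h1.sub h2).sub h3
  have hψdiff : Differentiable ℝ ψ := fun t => (hψd t).differentiableAt
  have hanti : AntitoneOn ψ (Set.Icc 0 1) := by
    apply antitoneOn_of_deriv_nonpos (convex_Icc 0 1) hψdiff.continuous.continuousOn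
      (hψdiff.differentiableOn)
    intro t ht
    rw [interior_Icc] at ht
    rw [(hψd t).deriv]
    have hb1 : ⟪gradient f (a + t • d) - gradient f a, d⟫ ≤
        ‖gradient f (a + t • d) - gradient f a‖ * ‖d‖ := real_inner_le_norm _ _
    have hb2 : ‖gradient f (a + t • d) - gradient f a‖ ≤ ℓ * ‖(a + t • d) - a‖ :=
      hsmooth _ _
    have hb3 : ‖(a + t • d) - a‖ = t * ‖d‖ := by
      rw [add_sub_cancel_left, norm_smul, Real.norm_eq_abs, abs_of_pos ht.1]
    have hb4 : ⟪gradient f (a + t • d) - gradient f a, d⟫ =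
        ⟪gradient f (a + t • d), d⟫ - ⟪gradient f a, d⟫ := inner_sub_left _ _ _
    rw [hb3] at hb2
    have hprod := mul_le_mul_of_nonneg_right hb2 (norm_nonneg d)
    have hring : ℓ * (t * ‖d‖) * ‖d‖ = ℓ * t * ‖d‖ ^ 2 := by ring
    rw [hring] at hprod
    linarith [hb1, hb4, hprod]
  have h01 := hanti (Set.mem_Icc.2 ⟨le_refl 0, zero_le_one⟩)
      (Set.mem_Icc.2 ⟨zero_le_one, le_refl 1⟩) zero_le_one
  have hψ0 : ψ 0 = f a := by simp [hψ]
  have hψ1 : ψ 1 = f b - ⟪gradient f a, d⟫ - ℓ / 2 * ‖d‖ ^ 2 := by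
    simp [hψ, hd]
  rw [hψ0, hψ1] at h01
  linarith

omit [CompleteSpace E] in
lemma isProjOn_inner_le {X : Set E} (hXcv : Convex ℝ X) {v p : E}
    (h : IsProjOn X v p)
    {w : E} (hw : w ∈ X) : ⟪v - p, w - p⟫ ≤ 0 := by
  haveI : Nonempty X := ⟨⟨p, h.1⟩⟩
  have heq : ‖v - p‖ = ⨅ w : X, ‖v - w‖ := by
    apply le_antisymm
    · exact le_ciInf fun ⟨w', hw'⟩ => h.2 w' hw'
    · exact ciInf_le ⟨0, by rintro _ ⟨w', rfl⟩; exact norm_nonneg _⟩ (⟨p, h.1⟩ : X)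
  exact (norm_eq_iInf_iff_real_inner_le_zero hXcv h.1).1 heq w hw


lemma young_ineq {c B s : ℝ} (hc : 0 < c) : B * s ≤ c * s ^ 2 + B ^ 2 / (4 * c) := by
  have h := div_nonneg (sq_nonneg (2 * c * s - B)) (by positivity : (0:ℝ) ≤ 4 * c)
  have hexp : (2 * c * s - B) ^ 2 / (4 * c) = c * s ^ 2 + B ^ 2 / (4 * c) - B * s := by
    field_simp; ring
  linarith [hexp ▸ h]

lemma hQ_identity (ℓ τ : ℝ) (hτ : τ ≠ 0) (d r m : E) :
    2 * ℓ * ⟪d, τ • r + (1 - τ) • m - d⟫ + ℓ / 2 * ‖d‖ ^ 2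
      - τ * (4 * ℓ * τ ^ 2) / 2 * ‖r‖ ^ 2 - (1 - τ) * (4 * ℓ * τ ^ 2) / 2 * ‖m‖ ^ 2
      + (4 * ℓ * τ ^ 2) / 4 * ‖r + τ⁻¹ • ((1 - τ) • m - d)‖ ^ 2
      - (1 - τ) * ((4 * ℓ * τ ^ 2) / 4) * ‖r + τ⁻¹ • m‖ ^ 2
    = -(ℓ / 2) * ‖d‖ ^ 2 - ℓ * τ ^ 3 * ‖r‖ ^ 2 - ℓ * (τ + τ ^ 2 - 2 * τ ^ 3) * ‖m‖ ^ 2 := by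
  simp only [← real_inner_self_eq_norm_sq]
  simp only [inner_add_left, inner_add_right, inner_sub_left, inner_sub_right,
    real_inner_smul_left, real_inner_smul_right]
  rw [real_inner_comm r d, real_inner_comm m d, real_inner_comm m r]
  field_simp
  ring

set_option maxHeartbeats 1000000 in
lemma agd_step (X : Set E) (hXcv : Convex ℝ X)
    (f : E → ℝ) (ℓ μ δ τ : ℝ) (hℓ : 0 < ℓ) (hτ0 : 0 < τ) (hτ1 : τ ≤ 1/2)
    (hμτ : μ = 4 * ℓ * τ ^ 2) (hδ : 0 ≤ δ)
    (hfdiff : Differentiable ℝ f)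
    (hsmooth : ∀ a b : E, ‖gradient f a - gradient f b‖ ≤ ℓ * ‖a - b‖)
    (hsc : ConvexOn ℝ Set.univ (fun x => f x - μ / 2 * ‖x‖ ^ 2))
    (xs : E) (hxs : xs ∈ X)
    (g : E → E) (hg : ∀ x : E, ‖g x - gradient f x‖ ≤ δ)
    (a b c : E) (haX : a ∈ X)
    (hproj : IsProjOn X (b - (1/(2*ℓ)) • g b) c)
    (p v : E) (hp : p = (b - xs) + τ⁻¹ • (b - a))
    (hv : v = (b - xs) + τ⁻¹ • ((1 - τ) • (b - a) - (b - c))) :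
    f c - f xs + μ/4 * ‖v‖^2 ≤
      (1 - τ) * (f a - f xs) + (1 - τ) * (μ/4 * ‖p‖^2) + (1/(2*ℓ) + 1/μ) * δ^2 := by
  have hμ0 : 0 < μ := by rw [hμτ]; positivity
  set G := gradient f b with hG
  set e' := g b - G with he'def
  set d := b - c with hd
  set m := b - a with hm
  set r := b - xs with hr
  set u := (1 - τ) • a + τ • xs with hu
  have huX : u ∈ X := hXcv haX hxs (by linarith) hτ0.le (by ring)
  have he' : ‖e'‖ ≤ δ := hg b
  -- basic inequalities
  have h1 : f b + ⟪G, xs - b⟫ + μ / 2 * ‖xs - b‖ ^ 2 ≤ f xs := strong_convex_lower hfdiff hsc b xs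
  have h2 : f b + ⟪G, a - b⟫ + μ / 2 * ‖a - b‖ ^ 2 ≤ f a := strong_convex_lower hfdiff hsc b a
  have h3 : f c ≤ f b + ⟪G, c - b⟫ + ℓ / 2 * ‖c - b‖ ^ 2 := smooth_upper hfdiff hsmooth b c
  have hnr : ‖xs - b‖ = ‖r‖ := by rw [hr, norm_sub_rev]
  have hnm : ‖a - b‖ = ‖m‖ := by rw [hm, norm_sub_rev]
  have hnd : ‖c - b‖ = ‖d‖ := by rw [hd, norm_sub_rev]
  rw [hnr] at h1
  rw [hnm] at h2
  rw [hnd] at h3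
  -- scaled versions
  have h1s : τ * f b + τ * ⟪G, xs - b⟫ + τ * (μ / 2 * ‖r‖ ^ 2) ≤ τ * f xs := by
    have := mul_le_mul_of_nonneg_left h1 hτ0.le
    nlinarith [this]
  have h2s : (1 - τ) * f b + (1 - τ) * ⟪G, a - b⟫ + (1 - τ) * (μ / 2 * ‖m‖ ^ 2)
      ≤ (1 - τ) * f a := by
    have h1τ : (0:ℝ) ≤ 1 - τ := by linarith
    have := mul_le_mul_of_nonneg_left h2 h1τ
    nlinarith [this]
  -- projection variational inequality
  have h4 := isProjOn_inner_le hXcv hproj huX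
  have h4' : ⟪g b, c - u⟫ ≤ 2 * ℓ * ⟪d, c - u⟫ := by
    have hsub : (b - (1/(2*ℓ)) • g b) - c = d - (1/(2*ℓ)) • g b := by rw [hd]; abel
    rw [hsub, inner_sub_left, real_inner_smul_left] at h4
    have e1 : ⟪g b, c - u⟫ = -⟪g b, u - c⟫ := by
      rw [show c - u = -(u - c) by abel, inner_neg_right]
    have e2 : ⟪d, c - u⟫ = -⟪d, u - c⟫ := by
      rw [show c - u = -(u - c) by abel, inner_neg_right]
    rw [e1, e2]
    have h2ℓ : (0:ℝ) < 2 * ℓ := by positivity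
    have h' : ⟪d, u - c⟫ ≤ 1/(2*ℓ) * ⟪g b, u - c⟫ := by linarith
    have key : 2 * ℓ * ⟪d, u - c⟫ ≤ 2 * ℓ * (1/(2*ℓ) * ⟪g b, u - c⟫) :=
      mul_le_mul_of_nonneg_left h' h2ℓ.le
    have key2 : 2 * ℓ * (1/(2*ℓ) * ⟪g b, u - c⟫) = ⟪g b, u - c⟫ := by
      field_simp
    linarith [key, key2 ▸ key]
  -- linear identities
  have idG : ⟪G, c - b⟫ - τ * ⟪G, xs - b⟫ - (1 - τ) * ⟪G, a - b⟫ = ⟪G, c - u⟫ := by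
    have : (c - b) - τ • (xs - b) - (1 - τ) • (a - b) = c - u := by
      rw [hu]; match_scalars <;> ring
    rw [← this]
    simp only [inner_sub_right, real_inner_smul_right]
  have idP5 : ⟪G, c - u⟫ = ⟪g b, c - u⟫ - ⟪e', c - u⟫ := by
    rw [he'def, inner_sub_left]
    ring
  have idcu : c - u = τ • r + (1 - τ) • m - d := by
    rw [hu, hr, hm, hd]; match_scalars <;> ring
  have ide : -⟪e', c - u⟫ = ⟪e', d⟫ + τ * (-⟪e', r⟫) + (1 - τ) * (-⟪e', m⟫) := by
    rw [idcu]
    simp only [inner_sub_right, inner_add_right, real_inner_smul_right]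
    ring
  -- Young inequalities
  have csd : ⟪e', d⟫ ≤ δ * ‖d‖ := by
    calc ⟪e', d⟫ ≤ ‖e'‖ * ‖d‖ := real_inner_le_norm e' d
    _ ≤ δ * ‖d‖ := mul_le_mul_of_nonneg_right he' (norm_nonneg d)
  have csr : -⟪e', r⟫ ≤ δ * ‖r‖ := by
    calc -⟪e', r⟫ ≤ |⟪e', r⟫| := neg_le_abs _
    _ ≤ ‖e'‖ * ‖r‖ := abs_real_inner_le_norm e' r
    _ ≤ δ * ‖r‖ := mul_le_mul_of_nonneg_right he' (norm_nonneg r)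
  have csm : -⟪e', m⟫ ≤ δ * ‖m‖ := by
    calc -⟪e', m⟫ ≤ |⟪e', m⟫| := neg_le_abs _
    _ ≤ ‖e'‖ * ‖m‖ := abs_real_inner_le_norm e' m
    _ ≤ δ * ‖m‖ := mul_le_mul_of_nonneg_right he' (norm_nonneg m)
  have y1 : ⟪e', d⟫ ≤ ℓ / 2 * ‖d‖ ^ 2 + δ ^ 2 / (2 * ℓ) := by
    have hy := young_ineq (c := ℓ/2) (B := δ) (s := ‖d‖) (by positivity)
    have : δ ^ 2 / (4 * (ℓ/2)) = δ ^ 2 / (2 * ℓ) := by ring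
    linarith [csd, this ▸ hy]
  have y2 : τ * (-⟪e', r⟫) ≤ ℓ * τ ^ 3 * ‖r‖ ^ 2 + δ ^ 2 / (4 * ℓ * τ) := by
    have hy := young_ineq (c := ℓ * τ ^ 3) (B := τ * δ) (s := ‖r‖) (by positivity)
    have heq : (τ * δ) ^ 2 / (4 * (ℓ * τ ^ 3)) = δ ^ 2 / (4 * ℓ * τ) := by
      rw [div_eq_div_iff (by positivity) (by positivity)]; ring
    have hmul : τ * (-⟪e', r⟫) ≤ τ * (δ * ‖r‖) := mul_le_mul_of_nonneg_left csr hτ0.le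
    nlinarith [heq ▸ hy, hmul]
  have y3 : (1 - τ) * (-⟪e', m⟫) ≤ ℓ * (τ + τ ^ 2 - 2 * τ ^ 3) * ‖m‖ ^ 2
      + (1 - τ) * δ ^ 2 / (4 * ℓ * τ * (1 + 2 * τ)) := by
    have h1τ : (0:ℝ) ≤ 1 - τ := by linarith
    have hy := young_ineq (c := ℓ * τ * (1 + 2 * τ)) (B := δ) (s := ‖m‖) (by positivity)
    have hmul : (1 - τ) * (-⟪e', m⟫) ≤ (1 - τ) * (δ * ‖m‖) :=
      mul_le_mul_of_nonneg_left csm h1τ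
    have hmul2 : (1 - τ) * (δ * ‖m‖) ≤
        (1 - τ) * (ℓ * τ * (1 + 2 * τ) * ‖m‖ ^ 2 + δ ^ 2 / (4 * (ℓ * τ * (1 + 2 * τ)))) :=
      mul_le_mul_of_nonneg_left hy h1τ
    have heq : (1 - τ) * (ℓ * τ * (1 + 2 * τ) * ‖m‖ ^ 2 + δ ^ 2 / (4 * (ℓ * τ * (1 + 2 * τ))))
        = ℓ * (τ + τ ^ 2 - 2 * τ ^ 3) * ‖m‖ ^ 2 + (1 - τ) * δ ^ 2 / (4 * ℓ * τ * (1 + 2 * τ)) := by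
      rw [mul_add]
      congr 1
      · ring
      · ring
    linarith [hmul, heq ▸ hmul2]
  -- delta bookkeeping
  have S5 : δ ^ 2 / (2 * ℓ) + δ ^ 2 / (4 * ℓ * τ) + (1 - τ) * δ ^ 2 / (4 * ℓ * τ * (1 + 2 * τ))
      ≤ (1/(2*ℓ) + 1/μ) * δ ^ 2 := by
    have hfac : (1/(2*ℓ) + 1/μ) * δ ^ 2
        - (δ ^ 2 / (2 * ℓ) + δ ^ 2 / (4 * ℓ * τ) + (1 - τ) * δ ^ 2 / (4 * ℓ * τ * (1 + 2 * τ)))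
        = δ ^ 2 * (1 - τ ^ 2) / (4 * ℓ * τ ^ 2 * (1 + 2 * τ)) := by
      rw [hμτ]; field_simp; ring
    have hpos : 0 ≤ δ ^ 2 * (1 - τ ^ 2) / (4 * ℓ * τ ^ 2 * (1 + 2 * τ)) := by
      apply div_nonneg _ (by positivity)
      have : τ ^ 2 ≤ 1 := by nlinarith
      nlinarith [sq_nonneg δ]
    linarith
  -- core quadratic identity
  have hQ : 2 * ℓ * ⟪d, c - u⟫ + ℓ / 2 * ‖d‖ ^ 2
      - τ * μ / 2 * ‖r‖ ^ 2 - (1 - τ) * μ / 2 * ‖m‖ ^ 2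
      + μ / 4 * ‖v‖ ^ 2 - (1 - τ) * (μ / 4) * ‖p‖ ^ 2
    = -(ℓ / 2) * ‖d‖ ^ 2 - ℓ * τ ^ 3 * ‖r‖ ^ 2 - ℓ * (τ + τ ^ 2 - 2 * τ ^ 3) * ‖m‖ ^ 2 := by
    have hv' : v = r + τ⁻¹ • ((1 - τ) • m - d) := by rw [hv, hr, hm, hd]
    have hp' : p = r + τ⁻¹ • m := by rw [hp, hr, hm]
    rw [idcu, hv', hp', hμτ]
    have := hQ_identity ℓ τ hτ0.ne' d r m
    linarith [this]
  -- final combination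
  linarith [h3, h1s, h2s, h4', idG, idP5, ide, y1, y2, y3, S5, hQ]


end AuxAGD

set_option linter.unusedVariables false

set_option maxHeartbeats 1200000 in
/-- Proposition 3.4 / Lemma A.4: Inexact-AGD.
AGD with a `δ`-inexact gradient oracle on an `ℓ`-smooth, `μ`-strongly convex function over a
nonempty closed convex set `X`: starting from `x₀ = y₀ ∈ X`, with
`x_{t+1} = Π_X (y_t − g(y_t)/(2ℓ))` and
`y_{t+1} = x_{t+1} + ((2 − √(μ/ℓ))/(2 + √(μ/ℓ)))·(x_{t+1} − x_t)`, for every `T ≥ 0`,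
`f(x_T) − f(x*) ≤ exp(−(T/2)√(μ/ℓ))·(f(x₀) − f(x*) + (μ/4)‖x₀ − x*‖²)
  + √(ℓ/μ)·(1/ℓ + 2/μ)·δ²`. -/
theorem inexact_agd_convergence
    {E : Type*} [NormedAddCommGroup E] [InnerProductSpace ℝ E] [CompleteSpace E]
    (X : Set E) (hXne : X.Nonempty) (hXcl : IsClosed X) (hXcv : Convex ℝ X)
    (f : E → ℝ) (ℓ μ δ : ℝ) (hμ : 0 < μ) (hμℓ : μ ≤ ℓ) (hδ : 0 ≤ δ)
    (hfdiff : Differentiable ℝ f)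
    (hsmooth : ∀ a b : E, ‖gradient f a - gradient f b‖ ≤ ℓ * ‖a - b‖)
    (hsc : ConvexOn ℝ Set.univ (fun x => f x - μ / 2 * ‖x‖ ^ 2))
    (xs : E) (hxs : xs ∈ X) (hmin : ∀ x ∈ X, f xs ≤ f x)
    (g : E → E) (hg : ∀ x : E, ‖g x - gradient f x‖ ≤ δ)
    (x y : ℕ → E) (hx0 : x 0 = y 0) (hx0X : x 0 ∈ X)
    (hxupd : ∀ t : ℕ, IsProjOn X (y t - (1 / (2 * ℓ)) • g (y t)) (x (t + 1)))
    (hyupd : ∀ t : ℕ, y (t + 1) = x (t + 1) +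
      ((2 - Real.sqrt (μ / ℓ)) / (2 + Real.sqrt (μ / ℓ))) • (x (t + 1) - x t))
    (T : ℕ) :
    f (x T) - f xs ≤
      Real.exp (-((T : ℝ) / 2) * Real.sqrt (μ / ℓ)) *
        (f (x 0) - f xs + μ / 4 * ‖x 0 - xs‖ ^ 2) +
      Real.sqrt (ℓ / μ) * (1 / ℓ + 2 / μ) * δ ^ 2 := by
  have hℓ : 0 < ℓ := lt_of_lt_of_le hμ hμℓ
  set q : ℝ := Real.sqrt (μ / ℓ) with hqdef
  have hq2 : q ^ 2 = μ / ℓ := Real.sq_sqrt (by positivity)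
  have hq0 : 0 < q := Real.sqrt_pos.2 (by positivity)
  have hq1 : q ≤ 1 := by
    rw [hqdef, show (1:ℝ) = Real.sqrt 1 by simp]
    exact Real.sqrt_le_sqrt (by rw [div_le_one hℓ]; exact hμℓ)
  set τ : ℝ := q / 2 with hτdef
  have hτ0 : 0 < τ := by positivity
  have hτ1 : τ ≤ 1/2 := by rw [hτdef]; linarith
  have hμτ : μ = 4 * ℓ * τ ^ 2 := by
    have h1 : τ ^ 2 = μ / ℓ / 4 := by rw [hτdef]; rw [div_pow, hq2]; norm_num
    rw [h1]; field_simp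
  set z : ℕ → E := fun t => x t + ((1 + τ) / τ) • (y t - x t) with hzdef
  have hz0 : z 0 = x 0 := by
    show x 0 + ((1 + τ) / τ) • (y 0 - x 0) = x 0
    rw [← hx0, sub_self, smul_zero, add_zero]
  have hzrec : ∀ t, z (t + 1) = x (t + 1) + ((1 - τ) / τ) • (x (t + 1) - x t) := by
    intro t
    have h2q : (0:ℝ) < 2 + q := by linarith
    have hβ : (1 + τ) / τ * ((2 - q) / (2 + q)) = (1 - τ) / τ := by
      rw [hτdef]
      field_simp
    show x (t+1) + ((1 + τ) / τ) • (y (t+1) - x (t+1)) = _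
    rw [hyupd t, add_sub_cancel_left, smul_smul, hβ]
  have hmem : ∀ t, x t ∈ X := by
    intro t
    induction t with
    | zero => exact hx0X
    | succ n _ => exact (hxupd n).1
  set C : ℝ := 1/(2*ℓ) + 1/μ with hC
  have hC0 : 0 < C := by rw [hC]; positivity
  -- one-step inequality
  have step : ∀ t, f (x (t+1)) - f xs + μ/4 * ‖z (t+1) - xs‖^2 ≤
      (1 - τ) * (f (x t) - f xs + μ/4 * ‖z t - xs‖^2) + C * δ^2 := by
    intro t
    have hp : z t - xs = (y t - xs) + τ⁻¹ • (y t - x t) := by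
      show (x t + ((1 + τ) / τ) • (y t - x t)) - xs = _
      match_scalars <;> (field_simp; try ring)
    have hv : z (t+1) - xs = (y t - xs) + τ⁻¹ • ((1 - τ) • (y t - x t) - (y t - x (t+1))) := by
      rw [hzrec t]
      match_scalars <;> (field_simp; try ring)
    have h := agd_step X hXcv f ℓ μ δ τ hℓ hτ0 hτ1 hμτ hδ hfdiff hsmooth hsc xs hxs g hg
      (x t) (y t) (x (t+1)) (hmem t) (hxupd t) (z t - xs) (z (t+1) - xs) hp hv
    rw [hC]
    linarith [h]
  -- induction
  have hrec : ∀ t : ℕ, f (x t) - f xs + μ/4 * ‖z t - xs‖^2 ≤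
      (1 - τ)^t * (f (x 0) - f xs + μ/4 * ‖z 0 - xs‖^2) + C/τ * δ^2 := by
    intro t
    induction t with
    | zero =>
      simp only [pow_zero, one_mul]
      have : 0 ≤ C/τ * δ^2 := by positivity
      linarith
    | succ n ih =>
      have h1τ : (0:ℝ) ≤ 1 - τ := by linarith
      have hs := step n
      have h2 := mul_le_mul_of_nonneg_left ih h1τ
      have h3 : (1 - τ) * ((1 - τ)^n * (f (x 0) - f xs + μ/4 * ‖z 0 - xs‖^2) + C/τ * δ^2)
          + C * δ^2
          = (1 - τ)^(n+1) * (f (x 0) - f xs + μ/4 * ‖z 0 - xs‖^2) + C/τ * δ^2 := by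
        have hτne : τ ≠ 0 := hτ0.ne'
        field_simp
        ring
      linarith [hs, h2, h3]
  -- wrap up
  have hΦ0 : 0 ≤ f (x 0) - f xs + μ/4 * ‖z 0 - xs‖^2 := by
    have := hmin (x 0) hx0X
    have h2 : 0 ≤ μ/4 * ‖z 0 - xs‖^2 := by positivity
    linarith
  have hexp : (1 - τ)^T ≤ Real.exp (-((T : ℝ) / 2) * q) := by
    have h1 : 1 - τ ≤ Real.exp (-τ) := by
      have := Real.add_one_le_exp (-τ)
      linarith
    have h2 : (1 - τ)^T ≤ (Real.exp (-τ))^T :=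
      pow_le_pow_left₀ (by linarith) h1 T
    have h3 : (Real.exp (-τ))^T = Real.exp (-((T : ℝ) / 2) * q) := by
      rw [← Real.exp_nat_mul]
      congr 1
      rw [hτdef]
      ring
    linarith [h2, h3 ▸ h2]
  have hfinal1 : f (x T) - f xs ≤ (1 - τ)^T * (f (x 0) - f xs + μ/4 * ‖z 0 - xs‖^2)
      + C/τ * δ^2 := by
    have := hrec T
    have h2 : 0 ≤ μ/4 * ‖z T - xs‖^2 := by positivity
    linarith
  have hfinal2 : (1 - τ)^T * (f (x 0) - f xs + μ/4 * ‖z 0 - xs‖^2)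
      ≤ Real.exp (-((T : ℝ) / 2) * q) * (f (x 0) - f xs + μ/4 * ‖z 0 - xs‖^2) :=
    mul_le_mul_of_nonneg_right hexp hΦ0
  have hCτ : C/τ = Real.sqrt (ℓ/μ) * (1/ℓ + 2/μ) := by
    have hsq : Real.sqrt (ℓ/μ) = 1/q := by
      rw [hqdef, show ℓ/μ = (μ/ℓ)⁻¹ by rw [inv_div], Real.sqrt_inv, one_div]
    rw [hsq, hC, hτdef]
    field_simp
  rw [hz0] at hfinal1 hfinal2
  calc f (x T) - f xs ≤ (1 - τ)^T * (f (x 0) - f xs + μ/4 * ‖x 0 - xs‖^2) + C/τ * δ^2 :=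
        hfinal1
    _ ≤ Real.exp (-((T : ℝ) / 2) * q) * (f (x 0) - f xs + μ/4 * ‖x 0 - xs‖^2) + C/τ * δ^2 := by
        linarith [hfinal2]
    _ = Real.exp (-((T : ℝ) / 2) * q) * (f (x 0) - f xs + μ/4 * ‖x 0 - xs‖^2)
        + Real.sqrt (ℓ/μ) * (1/ℓ + 2/μ) * δ^2 := by rw [hCτ]
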